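/- Let d ≥ 4 be even and let C* = {m ∈ F_q^d : Γ(m) = 0}. There is a constant C₀ > 0 independent of q such that for every power q of an odd prime and every subset E ⊂ F_q^d, ∑_{m∈C*} |E^∨(m)|² ≤ C₀ (q^{−d−1}|E| + q^{−3d/2}|E|²). -/

import Mathlib

open Finset MeasureTheory
open scoped ENNReal

namespace ConeFF

variable (F : Type) [Field F] [Fintype F] [DecidableEq F]

/-- The cone `C = {x ∈ F^d : x₁² + ⋯ + x_{d-2}² = x_{d-1} x_d}` (0-indexed). -/
def cone (d : ℕ) (hd : 3 ≤ d) : Finset (Fin d → F) :=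
  Finset.univ.filter fun x =>
    (∑ i ∈ Finset.univ.filter (fun i : Fin d => (i : ℕ) < d - 2), x i ^ 2) =
      x ⟨d - 2, by omega⟩ * x ⟨d - 1, by omega⟩

/-- The quadratic form `Γ(ξ) = ξ₁² + ⋯ + ξ_{d-2}² − 4 ξ_{d-1} ξ_d`. -/
def gammaForm (d : ℕ) (hd : 3 ≤ d) (ξ : Fin d → F) : F :=
  (∑ i ∈ Finset.univ.filter (fun i : Fin d => (i : ℕ) < d - 2), ξ i ^ 2) -
    4 * ξ ⟨d - 2, by omega⟩ * ξ ⟨d - 1, by omega⟩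

/-- Indicator function of a finite set, with values in `ℂ`. -/
def ind {V : Type} [DecidableEq V] (E : Finset V) : V → ℂ :=
  fun x => if x ∈ E then 1 else 0

/-- Convolution with respect to the normalized counting measure `dx`. -/
noncomputable def conv (d : ℕ) (f g : (Fin d → F) → ℂ) : (Fin d → F) → ℂ :=
  fun y => ((Fintype.card F : ℂ) ^ d)⁻¹ * ∑ x, f (y - x) * g x

/-- The averaging operator `f ∗ σ` over the cone. -/
noncomputable def avg (d : ℕ) (hd : 3 ≤ d) (f : (Fin d → F) → ℂ) : (Fin d → F) → ℂ :=
  fun y => ((cone F d hd).card : ℂ)⁻¹ * ∑ x ∈ cone F d hd, f (y - x)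

/-- Inverse Fourier transform `f^∨(m) = q^{-d} ∑_x χ(m·x) f(x)`. -/
noncomputable def invFT (d : ℕ) (χ : AddChar F ℂ) (f : (Fin d → F) → ℂ)
    (m : Fin d → F) : ℂ :=
  ((Fintype.card F : ℂ) ^ d)⁻¹ * ∑ x, χ (dotProduct m x) * f x

/-- Fourier transform `ĝ(x) = ∑_m χ(−m·x) g(m)` on the dual space. -/
noncomputable def ft (d : ℕ) (χ : AddChar F ℂ) (g : (Fin d → F) → ℂ)
    (x : Fin d → F) : ℂ :=
  ∑ m, χ (-(dotProduct m x)) * g m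

/-- `σ^∨(m) = |C|⁻¹ ∑_{x∈C} χ(m·x)`. -/
noncomputable def sigmaInv (d : ℕ) (hd : 3 ≤ d) (χ : AddChar F ℂ) (m : Fin d → F) : ℂ :=
  ((cone F d hd).card : ℂ)⁻¹ * ∑ x ∈ cone F d hd, χ (dotProduct m x)

/-- `K(m) = σ^∨(m) − δ₀(m)`. -/
noncomputable def Kfun (d : ℕ) (hd : 3 ≤ d) (χ : AddChar F ℂ) (m : Fin d → F) : ℂ :=
  sigmaInv F d hd χ m - if m = 0 then 1 else 0

/-- `M(m) = C^∨(m) − (|C|/q^d) δ₀(m)`. -/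
noncomputable def Mfun (d : ℕ) (hd : 3 ≤ d) (χ : AddChar F ℂ) (m : Fin d → F) : ℂ :=
  invFT F d χ (ind (cone F d hd)) m -
    if m = 0 then ((cone F d hd).card : ℂ) / (Fintype.card F : ℂ) ^ d else 0

/-- `L^p(C,σ)` norm (for finite `p`), with `σ` the normalized surface measure. -/
noncomputable def coneLpNorm (d : ℕ) (hd : 3 ≤ d) (p : ℝ) (h : (Fin d → F) → ℂ) : ℝ :=
  (((cone F d hd).card : ℝ)⁻¹ * ∑ x ∈ cone F d hd, ‖h x‖ ^ p) ^ (1 / p)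

/-- `L^p(F_q^d, dx)` norm (for finite `p`), with `dx` the normalized counting measure. -/
noncomputable def spaceLpNorm (d : ℕ) (p : ℝ) (f : (Fin d → F) → ℂ) : ℝ :=
  (((Fintype.card F : ℝ) ^ d)⁻¹ * ∑ x, ‖f x‖ ^ p) ^ (1 / p)




section Aux

variable {d : ℕ}

lemma char_map_sum {F : Type} [Field F] (χ : AddChar F ℂ) {ι : Type*} (s : Finset ι)
    (f : ι → F) : χ (∑ i ∈ s, f i) = ∏ i ∈ s, χ (f i) := by
  classical
  induction s using Finset.cons_induction with
  | empty => simp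
  | cons a s ha ih => rw [Finset.sum_cons, Finset.prod_cons, AddChar.map_add_eq_mul, ih]

lemma sum_char_mul {F : Type} [Field F] [Fintype F] [DecidableEq F] (χ : AddChar F ℂ) (hχ : χ ≠ 1) (c : F) :
    ∑ s : F, χ (c * s) = if c = 0 then (Fintype.card F : ℂ) else 0 := by
  split_ifs with h
  · simp [h, Finset.card_univ]
  · have hp := (AddChar.IsPrimitive.of_ne_one hχ) h
    have := AddChar.sum_eq_zero_of_ne_one hp
    simpa [AddChar.mulShift_apply] using this

lemma sum_char_dot {F : Type} [Field F] [Fintype F] [DecidableEq F]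
    (χ : AddChar F ℂ) (hχ : χ ≠ 1) (v : Fin d → F) :
    ∑ m : Fin d → F, χ (dotProduct m v) =
      if v = 0 then (Fintype.card F : ℂ) ^ d else 0 := by
  have h1 : ∀ m : Fin d → F, χ (dotProduct m v) = ∏ i, χ (m i * v i) := by
    intro m; rw [dotProduct, char_map_sum]
  simp_rw [h1]
  rw [← Fintype.prod_sum (fun (i : Fin d) (x : F) => χ (x * v i))]
  by_cases hv : v = 0
  · simp [hv, Finset.card_univ]
  · rw [if_neg hv]
    obtain ⟨i, hi⟩ := Function.ne_iff.mp hv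
    refine Finset.prod_eq_zero (Finset.mem_univ i) ?_
    have := sum_char_mul χ hχ (v i)
    simp_rw [mul_comm (v i) _] at this
    rw [this, if_neg (by simpa using hi)]

lemma sum_split (hd : 3 ≤ d) {M : Type*} [AddCommMonoid M] (f : Fin d → M) :
    ∑ i, f i = (∑ i ∈ Finset.univ.filter (fun i : Fin d => (i : ℕ) < d - 2), f i)
      + f ⟨d - 2, by omega⟩ + f ⟨d - 1, by omega⟩ := by
  classical
  have h := Finset.sum_filter_add_sum_filter_not Finset.univ
    (fun i : Fin d => (i : ℕ) < d - 2) f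
  have h2 : Finset.univ.filter (fun i : Fin d => ¬ (i : ℕ) < d - 2) =
      {(⟨d - 2, by omega⟩ : Fin d), ⟨d - 1, by omega⟩} := by
    ext i
    simp only [Finset.mem_filter, Finset.mem_univ, true_and, Finset.mem_insert,
      Finset.mem_singleton, Fin.ext_iff]
    have := i.isLt
    omega
  have hne : (⟨d - 2, by omega⟩ : Fin d) ≠ ⟨d - 1, by omega⟩ := by
    simp only [ne_eq, Fin.ext_iff]; omega
  rw [← h, h2, Finset.sum_pair hne, add_assoc]

/-- The dual vector implementing the bilinear form associated to `gammaForm`. -/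
def wvec {F : Type} [Field F] (d : ℕ) (hd : 3 ≤ d) (t : F) (h : Fin d → F) : Fin d → F :=
  fun i =>
    if (i : ℕ) < d - 2 then 2 * t * h i
    else if (i : ℕ) = d - 2 then -(4 * t * h ⟨d - 1, by omega⟩)
    else -(4 * t * h ⟨d - 2, by omega⟩)

lemma phi_add {F : Type} [Field F] [Fintype F] [DecidableEq F] (hd : 3 ≤ d) (t : F)
    (u m h : Fin d → F) :
    t * gammaForm F d hd (m + h) + dotProduct (m + h) u =
      (t * gammaForm F d hd m + dotProduct m u)
      + ((t * gammaForm F d hd h + dotProduct h u)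
      + dotProduct m (wvec d hd t h)) := by
  classical
  have hwa : wvec d hd t h ⟨d - 2, by omega⟩ = -(4 * t * h ⟨d - 1, by omega⟩) := by
    have h1 : ¬((⟨d - 2, by omega⟩ : Fin d) : ℕ) < d - 2 := by
      show ¬(d - 2 < d - 2); omega
    have h2 : ((⟨d - 2, by omega⟩ : Fin d) : ℕ) = d - 2 := rfl
    simp only [wvec, if_neg h1, h2, if_true]
  have hwb : wvec d hd t h ⟨d - 1, by omega⟩ = -(4 * t * h ⟨d - 2, by omega⟩) := by
    have h1 : ¬((⟨d - 1, by omega⟩ : Fin d) : ℕ) < d - 2 := by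
      show ¬(d - 1 < d - 2); omega
    have h2 : ¬((⟨d - 1, by omega⟩ : Fin d) : ℕ) = d - 2 := by
      show ¬(d - 1 = d - 2); omega
    simp only [wvec, if_neg h1, if_neg h2]
  simp only [gammaForm, dotProduct, Pi.add_apply]
  simp only [sum_split hd]
  set A := Finset.univ.filter (fun i : Fin d => (i : ℕ) < d - 2) with hA
  have e1 : ∑ i ∈ A, (m i + h i) ^ 2 =
      ((∑ i ∈ A, m i ^ 2) + ∑ i ∈ A, h i ^ 2) + 2 * ∑ i ∈ A, m i * h i := by
    rw [Finset.mul_sum, ← Finset.sum_add_distrib, ← Finset.sum_add_distrib]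
    exact Finset.sum_congr rfl fun i _ => by ring
  have e2 : ∑ i ∈ A, (m i + h i) * u i =
      (∑ i ∈ A, m i * u i) + ∑ i ∈ A, h i * u i := by
    rw [← Finset.sum_add_distrib]
    exact Finset.sum_congr rfl fun i _ => by ring
  have e3 : ∑ i ∈ A, m i * wvec d hd t h i = 2 * t * ∑ i ∈ A, m i * h i := by
    rw [Finset.mul_sum]
    refine Finset.sum_congr rfl fun i hi => ?_
    rw [hA, Finset.mem_filter] at hi
    simp only [wvec, if_pos hi.2]
    ring
  rw [e1, e2, e3, hwa, hwb]
  ring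

lemma two_ne_zero' {F : Type} [Field F] (hchar : ringChar F ≠ 2) : (2 : F) ≠ 0 := by
  intro hh
  have h2 : ((2 : ℕ) : F) = 0 := by exact_mod_cast hh
  rcases (Nat.dvd_prime Nat.prime_two).mp (ringChar.dvd h2) with h | h
  · exact CharP.ringChar_ne_one h
  · exact hchar h

lemma four_ne_zero' {F : Type} [Field F] (hchar : ringChar F ≠ 2) : (4 : F) ≠ 0 := by
  have : (4 : F) = 2 * 2 := by norm_num
  rw [this]
  exact mul_ne_zero (two_ne_zero' hchar) (two_ne_zero' hchar)

lemma wvec_eq_zero {F : Type} [Field F] (hd : 3 ≤ d) (hchar : ringChar F ≠ 2)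
    {t : F} (ht : t ≠ 0) {h : Fin d → F} (hw : wvec d hd t h = 0) : h = 0 := by
  have h2 := two_ne_zero' (F := F) hchar
  have h4 := four_ne_zero' (F := F) hchar
  have key : ∀ j : Fin d, wvec d hd t h j = 0 := fun j => congrFun hw j
  have ha : h ⟨d - 2, by omega⟩ = 0 := by
    have := key ⟨d - 1, by omega⟩
    have hc1 : ¬((⟨d - 1, by omega⟩ : Fin d) : ℕ) < d - 2 := by
      show ¬(d - 1 < d - 2); omega
    have hc2 : ¬((⟨d - 1, by omega⟩ : Fin d) : ℕ) = d - 2 := by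
      show ¬(d - 1 = d - 2); omega
    rw [wvec, if_neg hc1, if_neg hc2, neg_eq_zero] at this
    rcases mul_eq_zero.mp this with hx | hx
    · rcases mul_eq_zero.mp hx with hy | hy
      · exact absurd hy h4
      · exact absurd hy ht
    · exact hx
  have hb : h ⟨d - 1, by omega⟩ = 0 := by
    have := key ⟨d - 2, by omega⟩
    have hc1 : ¬((⟨d - 2, by omega⟩ : Fin d) : ℕ) < d - 2 := by
      show ¬(d - 2 < d - 2); omega
    have hc2 : ((⟨d - 2, by omega⟩ : Fin d) : ℕ) = d - 2 := rfl
    rw [wvec, if_neg hc1, if_pos hc2, neg_eq_zero] at this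
    rcases mul_eq_zero.mp this with hx | hx
    · rcases mul_eq_zero.mp hx with hy | hy
      · exact absurd hy h4
      · exact absurd hy ht
    · exact hx
  funext i
  by_cases hi : (i : ℕ) < d - 2
  · have := key i
    rw [wvec, if_pos hi] at this
    rcases mul_eq_zero.mp this with hx | hx
    · rcases mul_eq_zero.mp hx with hy | hy
      · exact absurd hy h2
      · exact absurd hy ht
    · simpa using hx
  · by_cases hi2 : (i : ℕ) = d - 2
    · have : i = ⟨d - 2, by omega⟩ := Fin.ext hi2
      rw [this]; simpa using ha
    · have : i = ⟨d - 1, by omega⟩ := Fin.ext (by show (i : ℕ) = d - 1; have := i.isLt; omega)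
      rw [this]; simpa using hb

lemma gauss_modulus {F : Type} [Field F] [Fintype F] [DecidableEq F] (hd : 3 ≤ d)
    (hchar : ringChar F ≠ 2) (χ : AddChar F ℂ) (hχ : χ ≠ 1) {t : F} (ht : t ≠ 0)
    (u : Fin d → F) :
    (∑ m : Fin d → F, χ (t * gammaForm F d hd m + dotProduct m u)) *
      (starRingEnd ℂ) (∑ m : Fin d → F, χ (t * gammaForm F d hd m + dotProduct m u)) =
      (Fintype.card F : ℂ) ^ d := by
  classical
  have conj1 : ∀ x : F, (starRingEnd ℂ) (χ x) = χ (-x) :=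
    fun x => (AddChar.map_neg_eq_conj χ x).symm
  rw [map_sum]
  simp_rw [conj1]
  rw [Finset.sum_mul_sum, Finset.sum_comm]
  have step : ∀ m' : Fin d → F,
      (∑ m : Fin d → F, χ (t * gammaForm F d hd m + dotProduct m u) *
        χ (-(t * gammaForm F d hd m' + dotProduct m' u))) =
      ∑ h : Fin d → F, χ (t * gammaForm F d hd h + dotProduct h u) *
        χ (dotProduct m' (wvec d hd t h)) := by
    intro m'
    rw [← Equiv.sum_comp (Equiv.addLeft m') (fun m => χ (t * gammaForm F d hd m +
      dotProduct m u) * χ (-(t * gammaForm F d hd m' + dotProduct m' u)))]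
    refine Finset.sum_congr rfl fun h _ => ?_
    simp only [Equiv.coe_addLeft]
    rw [← AddChar.map_add_eq_mul, ← AddChar.map_add_eq_mul]
    congr 1
    rw [phi_add hd t u m' h]
    ring
  simp_rw [step]
  rw [Finset.sum_comm]
  have inner : ∀ h : Fin d → F,
      (∑ m' : Fin d → F, χ (t * gammaForm F d hd h + dotProduct h u) *
        χ (dotProduct m' (wvec d hd t h))) =
      χ (t * gammaForm F d hd h + dotProduct h u) *
        (if h = 0 then (Fintype.card F : ℂ) ^ d else 0) := by
    intro h
    rw [← Finset.mul_sum, sum_char_dot χ hχ]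
    congr 1
    by_cases hh : h = 0
    · subst hh
      rw [if_pos rfl, if_pos]
      funext i
      simp only [wvec, Pi.zero_apply, mul_zero, neg_zero]
      split_ifs <;> rfl
    · rw [if_neg hh, if_neg]
      intro hw
      exact hh (wvec_eq_zero hd hchar ht hw)
  simp_rw [inner]
  simp_rw [mul_ite, mul_zero]
  rw [Finset.sum_ite_eq' Finset.univ (0 : Fin d → F)
    (fun h => χ (t * gammaForm F d hd h + dotProduct h u) * (Fintype.card F : ℂ) ^ d)]
  rw [if_pos (Finset.mem_univ _)]
  have hz : t * gammaForm F d hd 0 + dotProduct (0 : Fin d → F) u = 0 := by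
    simp [gammaForm, dotProduct]
  rw [hz, AddChar.map_zero_eq_one, one_mul]

end Aux

/-- `∑_{m : Γ(m)=0} |E^∨(m)|² ≲ q^{-d-1}|E| + q^{-3d/2}|E|²` for even `d ≥ 4`. -/
theorem statement7 (d : ℕ) (hd : 4 ≤ d) (hde : Even d) :
    ∃ C₀ : ℝ, 0 < C₀ ∧
      ∀ (F : Type) [Field F] [Fintype F] [DecidableEq F], ringChar F ≠ 2 →
        ∀ χ : AddChar F ℂ, (∃ a, χ a ≠ 1) →
          ∀ E : Finset (Fin d → F),
            ∑ m ∈ Finset.univ.filter (fun m : Fin d → F => gammaForm F d (by omega) m = 0),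
                ‖invFT F d χ (ind E) m‖ ^ 2 ≤
              C₀ * ((Fintype.card F : ℝ) ^ (-((d : ℝ) + 1)) * E.card +
                (Fintype.card F : ℝ) ^ (-(3 * (d : ℝ) / 2)) * (E.card : ℝ) ^ 2) := by
  obtain ⟨k, hk⟩ := hde
  have hd3 : 3 ≤ d := by omega
  refine ⟨1, one_pos, ?_⟩
  intro F _ _ _ hchar χ hχex E
  have hχ : χ ≠ 1 := by
    obtain ⟨a, ha⟩ := hχex
    exact AddChar.ne_one_iff.mpr ⟨a, ha⟩
  classical
  set q : ℕ := Fintype.card F with hq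
  have hq1 : 1 < q := Fintype.one_lt_card
  have hq0 : (0 : ℝ) < q := by positivity
  set c : ℂ := ((q : ℂ) ^ d)⁻¹ with hc
  set Ev : (Fin d → F) → ℂ := invFT F d χ (ind E) with hEvdef
  set L : ℝ := ∑ m ∈ Finset.univ.filter (fun m : Fin d → F => gammaForm F d hd3 m = 0),
      ‖Ev m‖ ^ 2 with hL
  show L ≤ 1 * ((q : ℝ) ^ (-((d : ℝ) + 1)) * E.card +
    (q : ℝ) ^ (-(3 * (d : ℝ) / 2)) * (E.card : ℝ) ^ 2)
  have hLnn : 0 ≤ L := Finset.sum_nonneg fun m _ => by positivity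
  -- the building blocks
  set G : F → ℂ := fun t =>
    ∑ m : Fin d → F, χ (t * gammaForm F d hd3 m) * (Ev m * (starRingEnd ℂ) (Ev m)) with hG
  -- Step A : (q : ℂ) * L = ∑ t, G t
  have stepA : (q : ℂ) * (L : ℂ) = ∑ t : F, G t := by
    rw [hG, Finset.sum_comm]
    have h1 : ∀ m : Fin d → F,
        (∑ t : F, χ (t * gammaForm F d hd3 m) * (Ev m * (starRingEnd ℂ) (Ev m))) =
        (if gammaForm F d hd3 m = 0 then (q : ℂ) else 0) * (Ev m * (starRingEnd ℂ) (Ev m)) := by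
      intro m
      rw [← Finset.sum_mul]
      congr 1
      rw [← sum_char_mul χ hχ (gammaForm F d hd3 m)]
      exact Finset.sum_congr rfl fun t _ => by rw [mul_comm]
    simp_rw [h1]
    simp_rw [ite_mul, zero_mul]
    rw [← Finset.sum_filter]
    rw [← Finset.mul_sum]
    congr 1
    rw [hL]
    push_cast
    refine Finset.sum_congr rfl fun m _ => ?_
    rw [Complex.mul_conj, Complex.normSq_eq_norm_sq]
    push_cast
    ring
  -- basic expansions
  have hEv : ∀ m : Fin d → F, Ev m = c * ∑ x ∈ E, χ (dotProduct m x) := by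
    intro m
    rw [hEvdef]
    simp only [invFT, ind, mul_ite, mul_one, mul_zero]
    rw [← hq, ← hc]
    congr 1
    rw [Finset.sum_ite_mem, Finset.univ_inter]
  have hconjc : (starRingEnd ℂ) c = c := by
    rw [hc]; simp
  have hprod : ∀ (t : F) (m : Fin d → F),
      χ (t * gammaForm F d hd3 m) * (Ev m * (starRingEnd ℂ) (Ev m)) =
        c ^ 2 * ∑ x ∈ E, ∑ y ∈ E,
          χ (t * gammaForm F d hd3 m + dotProduct m (x - y)) := by
    intro t m
    rw [hEv m, map_mul (starRingEnd ℂ) c _, hconjc,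
      map_sum (starRingEnd ℂ) (fun x => χ (dotProduct m x)) E]
    simp_rw [← AddChar.map_neg_eq_conj]
    have expand : ∀ x y : Fin d → F,
        χ (t * gammaForm F d hd3 m + dotProduct m (x - y)) =
          χ (t * gammaForm F d hd3 m) *
            (χ (dotProduct m x) * χ (-(dotProduct m y))) := by
      intro x y
      rw [dotProduct_sub, sub_eq_add_neg, ← AddChar.map_add_eq_mul,
        ← AddChar.map_add_eq_mul]
    simp_rw [expand]
    have h2 : ∑ x ∈ E, ∑ y ∈ E, χ (t * gammaForm F d hd3 m) *
        (χ (dotProduct m x) * χ (-(dotProduct m y))) =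
        χ (t * gammaForm F d hd3 m) * ((∑ x ∈ E, χ (dotProduct m x)) *
          ∑ y ∈ E, χ (-(dotProduct m y))) := by
      rw [Finset.sum_mul_sum, Finset.mul_sum]
      simp_rw [Finset.mul_sum]
    rw [h2]
    ring
  have hGexp : ∀ t : F, G t = c ^ 2 * ∑ x ∈ E, ∑ y ∈ E,
      ∑ m : Fin d → F, χ (t * gammaForm F d hd3 m + dotProduct m (x - y)) := by
    intro t
    rw [hG]
    simp only []
    simp_rw [hprod t]
    rw [← Finset.mul_sum]
    congr 1
    rw [Finset.sum_comm]
    exact Finset.sum_congr rfl fun x _ => Finset.sum_comm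
  -- the t = 0 term
  have hG0 : G 0 = c ^ 2 * ((q : ℂ) ^ d * E.card) := by
    rw [hGexp 0]
    congr 1
    have h0 : ∀ x y : Fin d → F,
        (∑ m : Fin d → F, χ ((0 : F) * gammaForm F d hd3 m + dotProduct m (x - y))) =
          if x = y then (q : ℂ) ^ d else 0 := by
      intro x y
      simp_rw [zero_mul, zero_add]
      rw [sum_char_dot χ hχ, ← hq]
      congr 1
      simp [sub_eq_zero]
    simp_rw [h0]
    have h1 : ∀ x ∈ E, (∑ y ∈ E, if x = y then (q : ℂ) ^ d else 0) = (q : ℂ) ^ d := by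
      intro x hx
      rw [Finset.sum_ite_eq E x (fun _ => (q : ℂ) ^ d), if_pos hx]
    rw [Finset.sum_congr rfl h1, Finset.sum_const, nsmul_eq_mul, mul_comm]
  -- Gauss-sum bound for t ≠ 0
  have hSnorm : ∀ t : F, t ≠ 0 → ∀ u : Fin d → F,
      ‖∑ m : Fin d → F, χ (t * gammaForm F d hd3 m + dotProduct m u)‖ = (q : ℝ) ^ k := by
    intro t ht u
    have h1 := gauss_modulus hd3 hchar χ hχ ht u
    rw [Complex.mul_conj] at h1
    have h2 : Complex.normSq (∑ m : Fin d → F,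
        χ (t * gammaForm F d hd3 m + dotProduct m u)) = (q : ℝ) ^ d := by
      exact_mod_cast h1
    have h3 : ‖∑ m : Fin d → F,
        χ (t * gammaForm F d hd3 m + dotProduct m u)‖ ^ 2 = ((q : ℝ) ^ k) ^ 2 := by
      rw [Complex.sq_norm, h2, hk, ← pow_mul]
      congr 1
      omega
    rw [← Real.sqrt_sq (norm_nonneg _), h3, Real.sqrt_sq (by positivity)]
  have hGt : ∀ t : F, t ≠ 0 → ‖G t‖ ≤ ‖c‖ ^ 2 * ((q : ℝ) ^ k * (E.card : ℝ) ^ 2) := by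
    intro t ht
    rw [hGexp t, norm_mul, norm_pow]
    have h1 : ‖∑ x ∈ E, ∑ y ∈ E, ∑ m : Fin d → F,
        χ (t * gammaForm F d hd3 m + dotProduct m (x - y))‖ ≤
        (q : ℝ) ^ k * (E.card : ℝ) ^ 2 := by
      calc ‖∑ x ∈ E, ∑ y ∈ E, ∑ m : Fin d → F,
          χ (t * gammaForm F d hd3 m + dotProduct m (x - y))‖
          ≤ ∑ x ∈ E, ‖∑ y ∈ E, ∑ m : Fin d → F,
            χ (t * gammaForm F d hd3 m + dotProduct m (x - y))‖ :=
            norm_sum_le _ _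
        _ ≤ ∑ x ∈ E, ∑ y ∈ E, ‖∑ m : Fin d → F,
            χ (t * gammaForm F d hd3 m + dotProduct m (x - y))‖ :=
            Finset.sum_le_sum fun x _ => norm_sum_le _ _
        _ = ∑ x ∈ E, ∑ y ∈ E, (q : ℝ) ^ k :=
            Finset.sum_congr rfl fun x _ => Finset.sum_congr rfl fun y _ => hSnorm t ht _
        _ = (q : ℝ) ^ k * (E.card : ℝ) ^ 2 := by
            simp [Finset.sum_const, nsmul_eq_mul]
            ring
    have h2 : (0 : ℝ) ≤ ‖c‖ ^ 2 := by positivity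
    exact mul_le_mul_of_nonneg_left h1 h2
  -- split the sum over t and estimate
  have hsplit : (∑ t : F, G t) = G 0 + ∑ t ∈ Finset.univ.erase (0 : F), G t :=
    (Finset.add_sum_erase Finset.univ G (Finset.mem_univ 0)).symm
  have hnormc : ‖c‖ = ((q : ℝ) ^ d)⁻¹ := by
    rw [hc, norm_inv, norm_pow, Complex.norm_natCast]
  have hnormG0 : ‖G 0‖ = ((q : ℝ) ^ d)⁻¹ * E.card := by
    rw [hG0, norm_mul, norm_pow, hnormc, norm_mul, norm_pow, Complex.norm_natCast,
      Complex.norm_natCast]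
    have hqdne : ((q : ℝ) ^ d) ≠ 0 := by positivity
    field_simp
  have hcard_erase : (Finset.univ.erase (0 : F)).card = q - 1 := by
    rw [Finset.card_erase_of_mem (Finset.mem_univ 0), Finset.card_univ]
  have hboundsum : ‖∑ t : F, G t‖ ≤ ((q : ℝ) ^ d)⁻¹ * E.card +
      ((q : ℝ) - 1) * ((((q : ℝ) ^ d)⁻¹) ^ 2 * ((q : ℝ) ^ k * (E.card : ℝ) ^ 2)) := by
    rw [hsplit]
    refine le_trans (norm_add_le _ _) ?_
    refine add_le_add (le_of_eq hnormG0) ?_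
    refine le_trans (norm_sum_le _ _) ?_
    refine le_trans (Finset.sum_le_sum fun t ht' => hGt t (Finset.ne_of_mem_erase ht')) ?_
    rw [Finset.sum_const, hcard_erase, nsmul_eq_mul, hnormc, Nat.cast_sub hq1.le,
      Nat.cast_one]
  have hmain : (q : ℝ) * L ≤ ((q : ℝ) ^ d)⁻¹ * E.card +
      ((q : ℝ) - 1) * ((((q : ℝ) ^ d)⁻¹) ^ 2 * ((q : ℝ) ^ k * (E.card : ℝ) ^ 2)) := by
    have heq : (q : ℝ) * L = ‖(q : ℂ) * (L : ℂ)‖ := by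
      rw [norm_mul, Complex.norm_natCast, Complex.norm_real, Real.norm_eq_abs,
        abs_of_nonneg hLnn]
    rw [heq, stepA]
    exact hboundsum
  -- final arithmetic
  rw [one_mul]
  have hrw1 : (q : ℝ) ^ (-((d : ℝ) + 1)) = ((q : ℝ) ^ (d + 1))⁻¹ := by
    rw [← Real.rpow_natCast (q : ℝ) (d + 1), ← Real.rpow_neg hq0.le]
    congr 1
    push_cast
    ring
  have hrw2 : (q : ℝ) ^ (-(3 * (d : ℝ) / 2)) = ((q : ℝ) ^ (3 * k))⁻¹ := by
    rw [← Real.rpow_natCast (q : ℝ) (3 * k), ← Real.rpow_neg hq0.le]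
    congr 1
    rw [hk]
    push_cast
    ring
  rw [hrw1, hrw2]
  rw [← mul_le_mul_iff_right₀ hq0]
  refine le_trans hmain ?_
  have hqdne : ((q : ℝ) ^ d) ≠ 0 := by positivity
  have e1 : (q : ℝ) * (((q : ℝ) ^ (d + 1))⁻¹ * (E.card : ℝ)) =
      ((q : ℝ) ^ d)⁻¹ * E.card := by
    rw [pow_succ]
    field_simp
  have e2 : (((q : ℝ) ^ d)⁻¹) ^ 2 * ((q : ℝ) ^ k * (E.card : ℝ) ^ 2) =
      ((q : ℝ) ^ (3 * k))⁻¹ * (E.card : ℝ) ^ 2 := by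
    have h' : ((q : ℝ) ^ d) ^ 2 = (q : ℝ) ^ (3 * k) * (q : ℝ) ^ k := by
      rw [← pow_mul, ← pow_add]
      congr 1
      omega
    rw [inv_pow, h', mul_inv]
    field_simp
  rw [mul_add, e1, e2]
  refine add_le_add_right ?_ _
  have h3 : ((q : ℝ) - 1) ≤ (q : ℝ) := by linarith
  exact mul_le_mul_of_nonneg_right h3 (by positivity)



end ConeFF
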